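/- If the map a ↦ φ_α(|a|) is a norm on Mₙ(ℂ) (where φ_α is the Choquet-type trace with α(1) > 0), then α is midpoint concave: α(i+1) + α(i−1) ≤ 2α(i) for all i = 1,...,n−1. -/

import Mathlib

open Matrix BigOperators Finset
open scoped ComplexOrder

/-- The `i`-th largest eigenvalue (0-indexed) of a Hermitian matrix. -/
noncomputable def eigDesc {n : ℕ} (a : Matrix (Fin n) (Fin n) ℂ) (ha : a.IsHermitian) (i : Fin n) : ℝ :=
  ha.eigenvalues (Tuple.sort ha.eigenvalues i.rev)

/-- Eigenvalues in decreasing order, extended by `0` beyond the size. `eigN a ha i = λ_{i+1}(a)`. -/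
noncomputable def eigN {n : ℕ} (a : Matrix (Fin n) (Fin n) ℂ) (ha : a.IsHermitian) (i : ℕ) : ℝ :=
  if h : i < n then eigDesc a ha ⟨i, h⟩ else 0

/-- The non-linear trace of Choquet type:
`φ_α(a) = ∑_{i=1}^{n-1} (λ_i(a) - λ_{i+1}(a)) α(i) + λ_n(a) α(n)`. -/
noncomputable def choquetTrace {n : ℕ} (α : ℕ → ℝ) (a : Matrix (Fin n) (Fin n) ℂ)
    (ha : a.IsHermitian) : ℝ :=
  ∑ i ∈ Finset.range n, (eigN a ha i - eigN a ha (i + 1)) * α (i + 1)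

/-- Functional calculus of a Hermitian matrix `a` by a function `f : ℝ → ℝ` on its eigenvalues. -/
noncomputable def funCalc {n : ℕ} (f : ℝ → ℝ) (a : Matrix (Fin n) (Fin n) ℂ)
    (ha : a.IsHermitian) : Matrix (Fin n) (Fin n) ℂ :=
  (ha.eigenvectorUnitary : Matrix (Fin n) (Fin n) ℂ) *
    Matrix.diagonal (fun i => (f (ha.eigenvalues i) : ℂ)) *
    star (ha.eigenvectorUnitary : Matrix (Fin n) (Fin n) ℂ)

/-- The absolute value `|a| = (a^* a)^{1/2}` of a matrix. -/
noncomputable def matAbs {n : ℕ} (a : Matrix (Fin n) (Fin n) ℂ) : Matrix (Fin n) (Fin n) ℂ :=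
  ((Matrix.posSemidef_conjTranspose_mul_self a).1.eigenvectorUnitary : Matrix (Fin n) (Fin n) ℂ) *
    diagonal ((↑) ∘ (√·) ∘ (Matrix.posSemidef_conjTranspose_mul_self a).1.eigenvalues) *
    (star (Matrix.posSemidef_conjTranspose_mul_self a).1.eigenvectorUnitary : Matrix (Fin n) (Fin n) ℂ)

theorem matAbs_isHermitian {n : ℕ} (a : Matrix (Fin n) (Fin n) ℂ) : (matAbs a).IsHermitian :=
  by
    unfold matAbs
    have hd : (diagonal ((↑) ∘ (√·) ∘ (Matrix.posSemidef_conjTranspose_mul_self a).1.eigenvalues) :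
        Matrix (Fin n) (Fin n) ℂ).IsHermitian :=
      isHermitian_diagonal_of_self_adjoint _ (by ext i; simp [Function.comp, Complex.conj_ofReal])
    convert isHermitian_mul_mul_conjTranspose
      ((Matrix.posSemidef_conjTranspose_mul_self a).1.eigenvectorUnitary : Matrix (Fin n) (Fin n) ℂ) hd using 2
    simp [star_eq_conjTranspose]

section Aux

open Polynomial

variable {n : ℕ}

/-- charpoly of a diagonal matrix. -/
lemma my_charpoly_diag (c : Fin n → ℂ) :
    (Matrix.diagonal c).charpoly = ∏ i, (X - C (c i)) := by
  have h : Matrix.charmatrix (Matrix.diagonal c)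
      = Matrix.diagonal (fun i => (X : ℂ[X]) - C (c i)) := by
    ext i j
    by_cases h : i = j
    · subst h; simp
    · rw [Matrix.charmatrix_apply_ne _ _ _ h, Matrix.diagonal_apply_ne _ h,
        Matrix.diagonal_apply_ne _ h, map_zero, neg_zero]
  rw [Matrix.charpoly, h, Matrix.det_diagonal]

/-- charpoly is invariant under unitary conjugation. -/
lemma my_charpoly_conj (U D : Matrix (Fin n) (Fin n) ℂ)
    (h1 : U * star U = 1) :
    (U * D * star U).charpoly = D.charpoly := by
  have key : Matrix.charmatrix (U * D * star U) =
      (C : ℂ →+* ℂ[X]).mapMatrix U * Matrix.charmatrix D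
        * (C : ℂ →+* ℂ[X]).mapMatrix (star U) := by
    rw [Matrix.charmatrix, Matrix.charmatrix, Matrix.mul_sub, Matrix.sub_mul]
    congr 1
    · have hc : Matrix.scalar (Fin n) (X : ℂ[X]) * (C : ℂ →+* ℂ[X]).mapMatrix U
          = (C : ℂ →+* ℂ[X]).mapMatrix U * Matrix.scalar (Fin n) (X : ℂ[X]) :=
        (Matrix.scalar_commute (X : ℂ[X]) (fun r => Commute.all _ _) _).eq
      rw [← hc, mul_assoc, ← map_mul ((C : ℂ →+* ℂ[X]).mapMatrix) U (star U), h1,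
        _root_.map_one ((C : ℂ →+* ℂ[X]).mapMatrix), mul_one]
    · rw [map_mul ((C : ℂ →+* ℂ[X]).mapMatrix) (U * D) (star U),
        map_mul ((C : ℂ →+* ℂ[X]).mapMatrix) U D]
  unfold Matrix.charpoly
  rw [key, Matrix.det_mul, Matrix.det_mul, mul_right_comm, ← Matrix.det_mul,
    ← map_mul ((C : ℂ →+* ℂ[X]).mapMatrix) U (star U), h1, _root_.map_one ((C : ℂ →+* ℂ[X]).mapMatrix), Matrix.det_one, one_mul]

/-- The multiset of eigenvalues of a real diagonal matrix is the multiset of its entries. -/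
lemma my_eig_multiset (d : Fin n → ℝ)
    (hA : (Matrix.diagonal (fun j => (d j : ℂ))).IsHermitian) :
    Multiset.map hA.eigenvalues Finset.univ.val = Multiset.map d Finset.univ.val := by
  have hU1 : (hA.eigenvectorUnitary : Matrix (Fin n) (Fin n) ℂ)
      * star (hA.eigenvectorUnitary : Matrix (Fin n) (Fin n) ℂ) = 1 :=
    Matrix.mem_unitaryGroup_iff.mp hA.eigenvectorUnitary.2
  have h2 : (Matrix.diagonal fun j => (d j : ℂ)).charpoly
      = ∏ i, (X - C ((hA.eigenvalues i : ℝ) : ℂ)) := by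
    conv_lhs => rw [hA.spectral_theorem]
    rw [Unitary.conjStarAlgAut_apply, my_charpoly_conj _ _ hU1]
    have : (RCLike.ofReal ∘ hA.eigenvalues : Fin n → ℂ)
        = fun i => ((hA.eigenvalues i : ℝ) : ℂ) := rfl
    rw [this, my_charpoly_diag]
  have h1 : (Matrix.diagonal fun j => (d j : ℂ)).charpoly = ∏ i, (X - C ((d i : ℝ) : ℂ)) :=
    my_charpoly_diag _
  have key : ∀ c : Fin n → ℝ, (∏ i, (X - C ((c i : ℝ) : ℂ))).roots
      = Multiset.map (fun i => ((c i : ℝ) : ℂ)) Finset.univ.val := by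
    intro c
    rw [Finset.prod_eq_multiset_prod]
    have hmm : Multiset.map (fun i => X - C ((c i : ℝ) : ℂ)) Finset.univ.val
        = Multiset.map (fun a => X - C a)
          (Multiset.map (fun i => ((c i : ℝ) : ℂ)) Finset.univ.val) :=
      (Multiset.map_map (fun a => (X : ℂ[X]) - C a)
        (fun i => ((c i : ℝ) : ℂ)) Finset.univ.val).symm
    rw [hmm, Polynomial.roots_multiset_prod_X_sub_C]
  have h3 : Multiset.map (fun i => ((hA.eigenvalues i : ℝ) : ℂ)) Finset.univ.val
      = Multiset.map (fun i => ((d i : ℝ) : ℂ)) Finset.univ.val := by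
    rw [← key, ← key, ← h1, ← h2]
  apply Multiset.map_injective Complex.ofReal_injective
  rwa [Multiset.map_map, Multiset.map_map]

lemma my_map_perm {β : Type*} (f : Fin n → β) (σ : Equiv.Perm (Fin n)) :
    Multiset.map (f ∘ σ) Finset.univ.val = Multiset.map f Finset.univ.val := by
  rw [← Multiset.map_map f σ, Multiset.map_univ_val_equiv]

lemma my_mono_unique {g e : Fin n → ℝ} (hg : Monotone g) (he : Monotone e)
    (h : Multiset.map g Finset.univ.val = Multiset.map e Finset.univ.val) : g = e := by
  apply List.ofFn_injective
  refine List.Perm.eq_of_sortedLE hg.sortedLE_ofFn he.sortedLE_ofFn ?_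
  rw [← Multiset.coe_eq_coe, ← Fin.univ_val_map, ← Fin.univ_val_map]
  exact h

lemma my_anti_unique {g e : Fin n → ℝ} (hg : Antitone g) (he : Antitone e)
    (h : Multiset.map g Finset.univ.val = Multiset.map e Finset.univ.val) : g = e := by
  have hrev : Antitone (Fin.rev : Fin n → Fin n) := fun i j hij => Fin.rev_le_rev.mpr hij
  have h1 : Monotone (g ∘ Fin.rev) := fun i j hij => hg (hrev hij)
  have h2 : Monotone (e ∘ Fin.rev) := fun i j hij => he (hrev hij)
  have h3 : g ∘ Fin.rev = e ∘ Fin.rev := by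
    apply my_mono_unique h1 h2
    have hgr : g ∘ Fin.rev = g ∘ (Fin.revPerm : Equiv.Perm (Fin n)) := rfl
    have her : e ∘ Fin.rev = e ∘ (Fin.revPerm : Equiv.Perm (Fin n)) := rfl
    rw [hgr, her, my_map_perm, my_map_perm]
    exact h
  funext i
  have := congrFun h3 i.rev
  simpa using this

open scoped MatrixOrder in
/-- The value of `choquetTrace` on a nonnegative real diagonal matrix. -/
lemma my_N_diag (α : ℕ → ℝ) (d e : Fin n → ℝ) (hd : ∀ j, 0 ≤ d j)
    (he : Antitone e)
    (hmult : Multiset.map d Finset.univ.val = Multiset.map e Finset.univ.val)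
    (eN : ℕ → ℝ) (heN : ∀ k : Fin n, e k = eN k.1) (heN0 : eN n = 0) :
    choquetTrace α (matAbs (Matrix.diagonal (fun j => (d j : ℂ))))
      (matAbs_isHermitian _) = ∑ k ∈ Finset.range n, (eN k - eN (k + 1)) * α (k + 1) := by
  set A := Matrix.diagonal (fun j => (d j : ℂ)) with hAdef
  have hAherm : A.IsHermitian := by
    rw [hAdef]
    exact Matrix.isHermitian_diagonal_iff.mpr fun j => Complex.conj_ofReal (d j)
  have hpsd : A.PosSemidef := by
    rw [hAdef]
    exact Matrix.posSemidef_diagonal_iff.mpr fun j => Complex.zero_le_real.mpr (hd j)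
  have habs : matAbs A = A := by
    have h0 : (0 : Matrix (Fin n) (Fin n) ℂ) ≤ A := hpsd.nonneg
    have hAA : Aᴴ * A = A * A := by rw [hAherm]
    have e : matAbs A = CFC.sqrt (Aᴴ * A) := by
      rw [CFC.sqrt_eq_cfc, cfc_nnreal_eq_real _ (Aᴴ * A) (Matrix.posSemidef_conjTranspose_mul_self A).nonneg,
        (Matrix.posSemidef_conjTranspose_mul_self A).1.cfc_eq, Matrix.IsHermitian.cfc,
        Unitary.conjStarAlgAut_apply]
      unfold matAbs
      congr 2
      ext i j
      simp [Function.comp_def, Real.coe_sqrt, Real.coe_toNNReal',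
        (Matrix.posSemidef_conjTranspose_mul_self A).eigenvalues_nonneg]
    rw [e, hAA, CFC.sqrt_mul_self A h0]
  have key : ∀ (M : Matrix (Fin n) (Fin n) ℂ) (hM : M.IsHermitian), M = A →
      choquetTrace α M hM = ∑ k ∈ Finset.range n, (eN k - eN (k + 1)) * α (k + 1) := by
    rintro M hM rfl
    have hmeig : Multiset.map hM.eigenvalues Finset.univ.val
        = Multiset.map e Finset.univ.val := (my_eig_multiset d hM).trans hmult
    have hdesc : eigDesc A hM = e := by
      apply my_anti_unique ?_ he ?_
      · have hrev : Antitone (Fin.rev : Fin n → Fin n) := fun i j hij => Fin.rev_le_rev.mpr hij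
        have hm : Monotone (hM.eigenvalues ∘ Tuple.sort hM.eigenvalues) :=
          Tuple.monotone_sort hM.eigenvalues
        exact fun i j hij => hm (hrev hij)
      · have hfn : eigDesc A hM
            = (hM.eigenvalues ∘ (Tuple.sort hM.eigenvalues : Equiv.Perm (Fin n)))
              ∘ (Fin.revPerm : Equiv.Perm (Fin n)) := rfl
        rw [hfn, my_map_perm, my_map_perm]
        exact hmeig
    unfold choquetTrace
    apply Finset.sum_congr rfl
    intro k hk
    have hkn : k < n := Finset.mem_range.mp hk
    have h1 : eigN A hM k = eN k := by
      rw [eigN, dif_pos hkn, hdesc]; exact heN ⟨k, hkn⟩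
    have h2 : eigN A hM (k + 1) = eN (k + 1) := by
      by_cases hk1 : k + 1 < n
      · rw [eigN, dif_pos hk1, hdesc]; exact heN ⟨k + 1, hk1⟩
      · have hkn' : k + 1 = n := by omega
        rw [eigN, dif_neg hk1, hkn', heN0]
    rw [h1, h2]
  exact key _ _ habs

lemma my_abel (α : ℕ → ℝ) (hα0 : α 0 = 0) (eN : ℕ → ℝ) (heN0 : eN n = 0) :
    ∑ k ∈ Finset.range n, (eN k - eN (k + 1)) * α (k + 1)
      = ∑ k ∈ Finset.range n, eN k * (α (k + 1) - α k) := by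
  simp only [sub_mul, mul_sub]
  rw [Finset.sum_sub_distrib, Finset.sum_sub_distrib]
  congr 1
  have hs := Finset.sum_range_succ' (fun k => eN k * α k) n
  have hs' := Finset.sum_range_succ (fun k => eN k * α k) n
  simp only [hα0, heN0, mul_zero, zero_mul, add_zero] at hs hs'
  rw [hs'] at hs
  exact hs.symm

lemma my_sum_ind (α : ℕ → ℝ) (hα0 : α 0 = 0) (m : ℕ) (hmn : m ≤ n) :
    ∑ k ∈ Finset.range n, (if k < m then (1 : ℝ) else 0) * (α (k + 1) - α k) = α m := by
  have hsub : Finset.range m ⊆ Finset.range n := Finset.range_subset_range.mpr hmn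
  rw [← Finset.sum_subset hsub (fun k _ hk => by
    rw [if_neg (by simpa using hk), zero_mul])]
  have : ∀ k ∈ Finset.range m,
      (if k < m then (1 : ℝ) else 0) * (α (k + 1) - α k) = α (k + 1) - α k := by
    intro k hk
    rw [if_pos (Finset.mem_range.mp hk), one_mul]
  rw [Finset.sum_congr rfl this, Finset.sum_range_sub, hα0, sub_zero]

end Aux

theorem stmt8 (n : ℕ) (α : ℕ → ℝ) (hα0 : α 0 = 0)
    (hmono : ∀ i j : ℕ, i ≤ j → j ≤ n → α i ≤ α j) (hα1 : 0 < α 1)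
    (N : Matrix (Fin n) (Fin n) ℂ → ℝ)
    (hN : ∀ a, N a = choquetTrace α (matAbs a) (matAbs_isHermitian a))
    (hzero : ∀ a, N a = 0 ↔ a = 0)
    (htri : ∀ a b, N (a + b) ≤ N a + N b)
    (hsmul : ∀ (k : ℂ) (a), N (k • a) = ‖k‖ * N a) :
    ∀ i : ℕ, 1 ≤ i → i ≤ n - 1 → α (i + 1) + α (i - 1) ≤ 2 * α i := by
  intro i h1i hin1
  have hi1n : i + 1 ≤ n := by omega
  have hin : i ≤ n := by omega
  have hi1 : i - 1 ≤ n := by omega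
  set dA : Fin n → ℝ := fun j => if j.1 < i then 1 else 0 with hdA
  set σ : Equiv.Perm (Fin n) := Equiv.swap ⟨i - 1, by omega⟩ ⟨i, by omega⟩ with hσ
  set dB : Fin n → ℝ := dA ∘ σ with hdB
  set dC : Fin n → ℝ := fun j => dA j + dB j with hdC
  set eA : ℕ → ℝ := fun k => if k < i then 1 else 0 with heA
  set eC : ℕ → ℝ := fun k =>
    (if k < i - 1 then (1 : ℝ) else 0) + (if k < i + 1 then (1 : ℝ) else 0) with heC
  have hdA0 : ∀ j, 0 ≤ dA j := by
    intro j; simp only [hdA]; split_ifs <;> norm_num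
  have hdAanti : Antitone dA := by
    intro j k hjk
    have hjk' : j.1 ≤ k.1 := hjk
    clear hjk
    simp only [hdA]
    split_ifs with h1 h2 <;> first | (exfalso; omega) | norm_num
  have hdAeN : ∀ j : Fin n, dA j = eA j.1 := fun j => rfl
  have heA0 : eA n = 0 := by simp only [heA]; rw [if_neg (by omega)]
  have hdB0 : ∀ j, 0 ≤ dB j := fun j => hdA0 (σ j)
  have hdBmult : Multiset.map dB Finset.univ.val = Multiset.map dA Finset.univ.val :=
    my_map_perm dA σ
  have hdCval : ∀ j : Fin n, dC j = eC j.1 := by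
    intro j
    by_cases hj1 : j = (⟨i - 1, by omega⟩ : Fin n)
    · subst hj1
      simp only [hdC, hdB, Function.comp_apply, hσ, Equiv.swap_apply_left, hdA, heC, Fin.val_mk]
      split_ifs <;> first | (exfalso; omega) | norm_num
    · by_cases hj2 : j = (⟨i, by omega⟩ : Fin n)
      · subst hj2
        simp only [hdC, hdB, Function.comp_apply, hσ, Equiv.swap_apply_right, hdA, heC, Fin.val_mk]
        split_ifs <;> first | (exfalso; omega) | norm_num
      · have hσj : σ j = j := by
          rw [hσ]; exact Equiv.swap_apply_of_ne_of_ne hj1 hj2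
        have hne1 : j.1 ≠ i - 1 := fun h => hj1 (Fin.ext h)
        have hne2 : j.1 ≠ i := fun h => hj2 (Fin.ext h)
        simp only [hdC, hdB, Function.comp_apply, hσj, hdA, heC]
        split_ifs <;> first | (exfalso; omega) | norm_num
  have heC0 : eC n = 0 := by
    simp only [heC]; rw [if_neg (by omega), if_neg (by omega), add_zero]
  have hdCanti : Antitone dC := by
    intro j k hjk
    have hjk' : j.1 ≤ k.1 := hjk
    clear hjk
    rw [hdCval j, hdCval k]
    simp only [heC]
    split_ifs <;> first | (exfalso; omega) | norm_num
  have hdC0 : ∀ j, 0 ≤ dC j := fun j => add_nonneg (hdA0 j) (hdB0 j)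
  have hsum : Matrix.diagonal (fun j => ((dA j : ℝ) : ℂ))
      + Matrix.diagonal (fun j => ((dB j : ℝ) : ℂ))
      = Matrix.diagonal (fun j => ((dC j : ℝ) : ℂ)) := by
    rw [Matrix.diagonal_add]
    congr 1
    funext j
    simp only [hdC]
    push_cast
    ring
  have vA : N (Matrix.diagonal (fun j => ((dA j : ℝ) : ℂ))) = α i := by
    rw [hN, my_N_diag α dA dA hdA0 hdAanti rfl eA hdAeN heA0, my_abel α hα0 eA heA0]
    simp only [heA]
    exact my_sum_ind α hα0 i hin
  have vB : N (Matrix.diagonal (fun j => ((dB j : ℝ) : ℂ))) = α i := by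
    rw [hN, my_N_diag α dB dA hdB0 hdAanti hdBmult eA hdAeN heA0, my_abel α hα0 eA heA0]
    simp only [heA]
    exact my_sum_ind α hα0 i hin
  have vC : N (Matrix.diagonal (fun j => ((dA j : ℝ) : ℂ))
      + Matrix.diagonal (fun j => ((dB j : ℝ) : ℂ))) = α (i - 1) + α (i + 1) := by
    rw [hsum, hN, my_N_diag α dC dC hdC0 hdCanti rfl eC hdCval heC0, my_abel α hα0 eC heC0]
    simp only [heC, add_mul]
    rw [Finset.sum_add_distrib, my_sum_ind α hα0 (i - 1) hi1, my_sum_ind α hα0 (i + 1) hi1n]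
  have := htri (Matrix.diagonal (fun j => ((dA j : ℝ) : ℂ)))
    (Matrix.diagonal (fun j => ((dB j : ℝ) : ℂ)))
  rw [vA, vB, vC] at this
  linarith
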